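/- arXiv:1605.02012 — 2 statements merged into one kernel-verified Lean document; each statement's English description precedes it below -/
import Mathlib

section
/- Let M ≥ 2, D = (M+2)(M-1)/2, and let φ_1, ..., φ_N be unit vectors in ℝ^M forming a tight frame, i.e., ∑_{j=1}^N φ_j φ_j^T = (N/M)·I_M. Then there exist unit vectors y_1, ..., y_N in ℝ^D such that ⟨φ_j, φ_l⟩^2 = 1/M + ((M-1)/M)·⟨y_j, y_l⟩ for all j, l ∈ {1, ..., N}, and additionally ∑_{j=1}^N y_j = 0. -/
open Finset


/-- The subspace of symmetric traceless "matrices" inside `ℝ^(M×M)`. -/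
def symTraceless (M : ℕ) : Submodule ℝ (EuclideanSpace ℝ (Fin M × Fin M)) where
  carrier := {A | (∀ a b : Fin M, A (a, b) = A (b, a)) ∧ ∑ a : Fin M, A (a, a) = 0}
  add_mem' := by
    rintro A B ⟨hA1, hA2⟩ ⟨hB1, hB2⟩
    refine ⟨fun a b => ?_, ?_⟩
    · simp [hA1 a b, hB1 a b]
    · simpa [Finset.sum_add_distrib] using by rw [hA2, hB2]; ring
  zero_mem' := by simp
  smul_mem' := by
    rintro c A ⟨hA1, hA2⟩
    refine ⟨fun a b => by simp [hA1 a b], ?_⟩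
    simp [← Finset.mul_sum, hA2]

lemma card_lt_pairs (M : ℕ) :
    Fintype.card {p : Fin M × Fin M // p.1 < p.2} = M * (M - 1) / 2 := by
  have e : {p : Fin M × Fin M // p.1 < p.2} ≃ Σ b : Fin M, Fin b.val :=
    { toFun := fun p => ⟨p.1.2, ⟨p.1.1, p.2⟩⟩
      invFun := fun s => ⟨(⟨s.2.1, s.2.2.trans s.1.2⟩, s.1), s.2.2⟩
      left_inv := fun p => rfl
      right_inv := fun s => rfl }
  rw [Fintype.card_congr e, Fintype.card_sigma]
  simp only [Fintype.card_fin]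
  rw [Fin.sum_univ_eq_sum_range (fun i => i) M]
  exact Finset.sum_range_id M

lemma finrank_symTraceless_le {M : ℕ} (hM : 2 ≤ M) :
    Module.finrank ℝ (symTraceless M) ≤ (M + 2) * (M - 1) / 2 := by
  classical
  haveI : NeZero M := ⟨by omega⟩
  let ι := {p : Fin M × Fin M // p.1 < p.2} ⊕ {a : Fin M // a ≠ 0}
  let Λ : symTraceless M →ₗ[ℝ] (ι → ℝ) :=
    { toFun := fun A => Sum.elim (fun p => (A : EuclideanSpace ℝ (Fin M × Fin M)) p.1)
        (fun a => (A : EuclideanSpace ℝ (Fin M × Fin M)) (a.1, a.1))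
      map_add' := fun A B => by funext i; cases i <;> rfl
      map_smul' := fun c A => by funext i; cases i <;> rfl }
  have hinj : Function.Injective Λ := by
    rw [injective_iff_map_eq_zero]
    intro A hA
    obtain ⟨hsym, htr⟩ := A.2
    have hdiag : ∀ a : Fin M, a ≠ 0 → (A : EuclideanSpace ℝ (Fin M × Fin M)) (a, a) = 0 := by
      intro a ha
      exact congrFun hA (Sum.inr ⟨a, ha⟩)
    have hoff : ∀ p : Fin M × Fin M, p.1 < p.2 → (A : EuclideanSpace ℝ (Fin M × Fin M)) p = 0 := by
      intro p hp
      exact congrFun hA (Sum.inl ⟨p, hp⟩)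
    have h00 : (A : EuclideanSpace ℝ (Fin M × Fin M)) (0, 0) = 0 := by
      have : ∑ a : Fin M, (A : EuclideanSpace ℝ (Fin M × Fin M)) (a, a)
          = (A : EuclideanSpace ℝ (Fin M × Fin M)) (0, 0) := by
        refine Finset.sum_eq_single 0 (fun a _ ha => hdiag a ha) (by simp)
      rw [this] at htr; exact htr
    apply Subtype.ext
    ext p
    rcases lt_trichotomy p.1 p.2 with h | h | h
    · simpa using hoff p h
    · rcases eq_or_ne p.1 0 with h0 | h0
      · have hp2 : p.2 = 0 := h ▸ h0
        have hp : p = ((0 : Fin M), (0 : Fin M)) := Prod.ext h0 hp2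
        rw [hp]; exact h00
      · have := hdiag p.1 h0
        have h2 : (A : EuclideanSpace ℝ (Fin M × Fin M)) p
            = (A : EuclideanSpace ℝ (Fin M × Fin M)) (p.1, p.1) := by
          conv_lhs => rw [show p = (p.1, p.2) from rfl, ← h]
        simpa [h2] using this
    · have := hoff (p.2, p.1) h
      have h2 := hsym p.1 p.2
      simp only [show (p.1, p.2) = p from rfl] at h2
      simpa [h2] using this
  have hle := LinearMap.finrank_le_finrank_of_injective hinj
  rw [Module.finrank_fintype_fun_eq_card] at hle
  have hcard : Fintype.card ι = M * (M - 1) / 2 + (M - 1) := by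
    rw [Fintype.card_sum, card_lt_pairs]
    congr 1
    have : Fintype.card {a : Fin M // ¬ (a = 0)} = M - 1 := by
      rw [Fintype.card_subtype_compl, Fintype.card_subtype_eq, Fintype.card_fin]
    simpa using this
  rw [hcard] at hle
  refine hle.trans ?_
  obtain ⟨k, hk⟩ : Even (M * (M - 1)) := by
    rcases Nat.even_or_odd M with h | h
    · exact h.mul_right _
    · exact (Nat.Odd.sub_odd h odd_one).mul_left _
  have hT : (M + 2) * (M - 1) = M * (M - 1) + 2 * (M - 1) := by rw [Nat.add_mul]
  omega

lemma key_sum {M : ℕ} (hM : 2 ≤ M) (x z : EuclideanSpace ℝ (Fin M))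
    (hx : ∑ a, x a * x a = 1) (hz : ∑ a, z a * z a = 1) :
    ∑ p : Fin M × Fin M,
      (x p.1 * x p.2 - if p.1 = p.2 then (M : ℝ)⁻¹ else 0)
        * (z p.1 * z p.2 - if p.1 = p.2 then (M : ℝ)⁻¹ else 0)
      = (∑ a, x a * z a) ^ 2 - (M : ℝ)⁻¹ := by
  have hM0 : (M : ℝ) ≠ 0 := by positivity
  rw [Fintype.sum_prod_type]
  have step : ∀ a : Fin M,
      ∑ b : Fin M, (x a * x b - if a = b then (M : ℝ)⁻¹ else 0)
          * (z a * z b - if a = b then (M : ℝ)⁻¹ else 0)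
      = (x a * z a) * (∑ b, x b * z b)
          - (M : ℝ)⁻¹ * (z a * z a) - (M : ℝ)⁻¹ * (x a * x a) + (M : ℝ)⁻¹ * (M : ℝ)⁻¹ := by
    intro a
    have expand : ∀ b : Fin M,
        (x a * x b - if a = b then (M : ℝ)⁻¹ else 0)
            * (z a * z b - if a = b then (M : ℝ)⁻¹ else 0)
        = (x a * z a) * (x b * z b)
            - (if b = a then (M : ℝ)⁻¹ * (z a * z a) else 0)
            - (if b = a then (M : ℝ)⁻¹ * (x a * x a) else 0)
            + (if b = a then (M : ℝ)⁻¹ * (M : ℝ)⁻¹ else 0) := by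
      intro b
      rcases eq_or_ne a b with h | h
      · subst h; simp; ring
      · simp [h, h.symm]; ring
    rw [Finset.sum_congr rfl (fun b _ => expand b)]
    rw [Finset.sum_add_distrib, Finset.sum_sub_distrib, Finset.sum_sub_distrib,
      ← Finset.mul_sum, Finset.sum_ite_eq' univ a, Finset.sum_ite_eq' univ a,
      Finset.sum_ite_eq' univ a]
    simp
  rw [Finset.sum_congr rfl (fun a _ => step a)]
  rw [Finset.sum_add_distrib, Finset.sum_sub_distrib, Finset.sum_sub_distrib,
    ← Finset.sum_mul, ← Finset.mul_sum, ← Finset.mul_sum, hx, hz]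
  rw [Finset.sum_const, Finset.card_univ, Fintype.card_fin, nsmul_eq_mul]
  have h1 : (M : ℝ) * ((M : ℝ)⁻¹ * (M : ℝ)⁻¹) = (M : ℝ)⁻¹ := by field_simp
  rw [h1]; ring

def padL {n D : ℕ} (h : n ≤ D) : EuclideanSpace ℝ (Fin n) →ₗ[ℝ] EuclideanSpace ℝ (Fin D) where
  toFun := fun x => WithLp.toLp 2 (fun i => if h' : (i : ℕ) < n then x ⟨i, h'⟩ else 0)
  map_add' := fun x z => by
    ext i
    by_cases h' : (i : ℕ) < n <;> simp [h', PiLp.add_apply]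
  map_smul' := fun c x => by
    ext i
    by_cases h' : (i : ℕ) < n <;> simp [h', PiLp.smul_apply]

lemma padL_inner {n D : ℕ} (h : n ≤ D) (x z : EuclideanSpace ℝ (Fin n)) :
    (inner ℝ (padL h x) (padL h z) : ℝ) = inner ℝ x z := by
  simp only [PiLp.inner_apply, RCLike.inner_apply', conj_trivial]
  have hL : ∀ i : Fin D, (padL h x) i * (padL h z) i
      = (fun j : ℕ => if h' : j < n then x ⟨j, h'⟩ * z ⟨j, h'⟩ else 0) (i : ℕ) := by
    intro i
    by_cases h' : (i : ℕ) < n <;> simp [padL, h']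
  rw [Finset.sum_congr rfl (fun i _ => hL i),
    Fin.sum_univ_eq_sum_range (fun j => if h' : j < n then x ⟨j, h'⟩ * z ⟨j, h'⟩ else 0) D]
  rw [← Finset.sum_subset (Finset.range_subset_range.mpr h)
    (by intro j _ hj; simp at hj; simp [hj])]
  rw [← Fin.sum_univ_eq_sum_range (fun j => if h' : j < n then x ⟨j, h'⟩ * z ⟨j, h'⟩ else 0) n]
  exact Finset.sum_congr rfl (fun i _ => by simp [i.2])



/-- (Zero-summing spherical embedding, real case.)
For `M ≥ 2`, `D = (M+2)(M-1)/2`, and unit vectors `φ_1, ..., φ_N` in `ℝ^M` forming a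
tight frame (`∑ j, φ_j φ_jᵀ = (N/M) • I`), there exist unit vectors `y_1, ..., y_N` in
`ℝ^D` with `⟨φ_j, φ_l⟩² = 1/M + ((M-1)/M) ⟨y_j, y_l⟩` for all `j, l`, and `∑ j, y_j = 0`. -/
theorem spherical_embedding_tight_real {M N : ℕ} (hM : 2 ≤ M)
    (φ : Fin N → EuclideanSpace ℝ (Fin M))
    (hunit : ∀ j, ‖φ j‖ = 1)
    (htight : ∀ x : EuclideanSpace ℝ (Fin M),
      ∑ j, (inner ℝ (φ j) x : ℝ) • φ j = ((N : ℝ) / M) • x) :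
    ∃ y : Fin N → EuclideanSpace ℝ (Fin ((M + 2) * (M - 1) / 2)),
      (∀ j, ‖y j‖ = 1) ∧
      (∀ j l, (inner ℝ (φ j) (φ l) : ℝ) ^ 2
        = 1 / (M : ℝ) + ((M : ℝ) - 1) / M * (inner ℝ (y j) (y l) : ℝ)) ∧
      ∑ j, y j = 0 := by
  classical
  have hM0 : (M : ℝ) ≠ 0 := by positivity
  have hM1 : (1 : ℝ) ≤ (M : ℝ) - 1 := by
    have : (2 : ℝ) ≤ (M : ℝ) := by exact_mod_cast hM
    linarith
  have hM1' : (M : ℝ) - 1 ≠ 0 := by linarith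
  set c : ℝ := Real.sqrt ((M : ℝ) / ((M : ℝ) - 1)) with hc
  have hc2 : c ^ 2 = (M : ℝ) / ((M : ℝ) - 1) := by
    rw [hc, Real.sq_sqrt]
    positivity
  -- unit-norm coordinates
  have hnorm : ∀ j, ∑ a, φ j a * φ j a = 1 := by
    intro j
    have h1 : (inner ℝ (φ j) (φ j) : ℝ) = 1 := by
      rw [real_inner_self_eq_norm_sq, hunit j]; norm_num
    rw [PiLp.inner_apply] at h1
    simpa [← sq] using h1
  have hinnerφ : ∀ j l, (inner ℝ (φ j) (φ l) : ℝ) = ∑ a, φ j a * φ l a := by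
    intro j l
    rw [PiLp.inner_apply]
    simp [RCLike.inner_apply']
    exact Finset.sum_congr rfl (fun _ _ => mul_comm _ _)
  -- the traceless symmetric images
  set ψ : Fin N → EuclideanSpace ℝ (Fin M × Fin M) :=
    fun j => WithLp.toLp 2 (fun p : Fin M × Fin M => c * (φ j p.1 * φ j p.2 - if p.1 = p.2 then (M : ℝ)⁻¹ else 0)) with hψ
  have hψmem : ∀ j, ψ j ∈ symTraceless M := by
    intro j
    constructor
    · intro a b
      rcases eq_or_ne a b with h | h
      · subst h; rfl
      · show c * (φ j a * φ j b - if a = b then (M : ℝ)⁻¹ else 0)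
            = c * (φ j b * φ j a - if b = a then (M : ℝ)⁻¹ else 0)
        rw [if_neg h, if_neg (Ne.symm h)]; ring
    · show ∑ a : Fin M, c * (φ j a * φ j a - if a = a then (M : ℝ)⁻¹ else 0) = 0
      have hterm : ∀ a : Fin M, c * (φ j a * φ j a - if a = a then (M : ℝ)⁻¹ else 0)
          = c * (φ j a * φ j a) - c * (M : ℝ)⁻¹ := fun a => by rw [if_pos rfl]; ring
      rw [Finset.sum_congr rfl (fun a _ => hterm a), Finset.sum_sub_distrib, ← Finset.mul_sum,
        hnorm j, Finset.sum_const, Finset.card_univ, Fintype.card_fin, nsmul_eq_mul, mul_one]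
      field_simp
      simp
  have hψinner : ∀ j l, (inner ℝ (ψ j) (ψ l) : ℝ)
      = c ^ 2 * ((inner ℝ (φ j) (φ l) : ℝ) ^ 2 - (M : ℝ)⁻¹) := by
    intro j l
    rw [PiLp.inner_apply]
    simp only [RCLike.inner_apply', conj_trivial]
    have : ∀ p : Fin M × Fin M, ψ j p * ψ l p
        = c ^ 2 * ((φ j p.1 * φ j p.2 - if p.1 = p.2 then (M : ℝ)⁻¹ else 0)
            * (φ l p.1 * φ l p.2 - if p.1 = p.2 then (M : ℝ)⁻¹ else 0)) := by
      intro p; show (c * _) * (c * _) = _; ring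
    rw [Finset.sum_congr rfl (fun p _ => this p), ← Finset.mul_sum,
      key_sum hM (φ j) (φ l) (hnorm j) (hnorm l), hinnerφ j l]
  -- tight frame implies second moments
  have hcomp : ∀ a b : Fin M, ∑ j, φ j a * φ j b
      = ((N : ℝ) / M) * (if a = b then 1 else 0) := by
    intro a b
    have h := htight (EuclideanSpace.single b 1)
    have h2 := congrFun (congrArg (fun v : EuclideanSpace ℝ (Fin M) => (v : Fin M → ℝ)) h) a
    simp only [Finset.sum_apply, PiLp.smul_apply, smul_eq_mul,
      EuclideanSpace.inner_single_right, conj_trivial, one_mul,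
      EuclideanSpace.single_apply] at h2
    rw [← h2, WithLp.ofLp_sum, Finset.sum_apply a Finset.univ (fun x => (φ x b • φ x).ofLp)]
    exact Finset.sum_congr rfl (fun j _ => by
      rw [PiLp.smul_apply, smul_eq_mul]; ring)
  have hψsum : ∑ j, ψ j = 0 := by
    ext p
    have h1 : (∑ j, ψ j) p = ∑ j, ψ j p := by
      rw [WithLp.ofLp_sum]; exact Finset.sum_apply p Finset.univ (fun j => (ψ j).ofLp)
    rw [h1]
    have h2 : ∀ j, ψ j p = c * (φ j p.1 * φ j p.2) - c * (if p.1 = p.2 then (M : ℝ)⁻¹ else 0) := by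
      intro j; show c * _ = _; ring
    rw [Finset.sum_congr rfl (fun j _ => h2 j), Finset.sum_sub_distrib, ← Finset.mul_sum,
      hcomp p.1 p.2, Finset.sum_const, Finset.card_univ, Fintype.card_fin, nsmul_eq_mul]
    have h0 : (0 : EuclideanSpace ℝ (Fin M × Fin M)) p = 0 := rfl
    rw [h0]
    rcases eq_or_ne p.1 p.2 with h | h
    · rw [if_pos h, if_pos h, div_eq_mul_inv]; ring
    · rw [if_neg h, if_neg h]; ring
  -- embed into ℝ^D
  set W := symTraceless M
  set n := Module.finrank ℝ W with hn
  have hnD : n ≤ (M + 2) * (M - 1) / 2 := finrank_symTraceless_le hM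
  set b := stdOrthonormalBasis ℝ W with hb
  set Y : Fin N → W := fun j => ⟨ψ j, hψmem j⟩ with hY
  refine ⟨fun j => padL hnD (b.repr (Y j)), ?_, ?_, ?_⟩
  · intro j
    have h1 : (inner ℝ (padL hnD (b.repr (Y j))) (padL hnD (b.repr (Y j))) : ℝ) = 1 := by
      rw [padL_inner, b.repr.inner_map_map, Submodule.coe_inner, hψinner j j, hc2,
        hinnerφ j j, hnorm j]
      field_simp
    have h2 := real_inner_self_eq_norm_sq (padL hnD (b.repr (Y j)))
    rw [h1] at h2
    have h3 : ‖padL hnD (b.repr (Y j))‖ ≥ 0 := norm_nonneg _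
    nlinarith [h2]
  · intro j l
    rw [padL_inner, b.repr.inner_map_map, Submodule.coe_inner]
    show (inner ℝ (φ j) (φ l) : ℝ) ^ 2 = 1 / (M : ℝ) + ((M : ℝ) - 1) / M * (inner ℝ (ψ j) (ψ l) : ℝ)
    rw [hψinner j l, hc2]
    field_simp
    ring
  · have hYsum : ∑ j, Y j = 0 := by
      apply Subtype.ext
      push_cast
      simpa using hψsum
    show ∑ j, (padL hnD) (b.repr (Y j)) = 0
    rw [← map_sum, ← map_sum, hYsum, map_zero, map_zero]
end

section
/- With a = √((5+√5)/10), the Tóth-type lower bound for N = 12 vectors in ℂ^2 is attained: (1/2)·csc(12π/(6·10)) = (1/2)·csc(π/5) = √((5+√5)/10) = a. Consequently, any set of 12 unit vectors in ℂ^2 whose coherence equals a achieves the lower bound μ_{12,2}(ℂ) ≥ (1/2)·csc(π/5), so μ_{12,2}(ℂ) = √((5+√5)/10). -/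
/-- The coherence of a family of `N` vectors in `ℂ^M`: the supremum of
`|⟨φ_j, φ_l⟩|` over all pairs `j ≠ l`. -/
noncomputable def coherence {M N : ℕ} (φ : Fin N → EuclideanSpace ℂ (Fin M)) : ℝ :=
  ⨆ p : {p : Fin N × Fin N // p.1 ≠ p.2}, ‖(inner ℂ (φ (p : Fin N × Fin N).1) (φ (p : Fin N × Fin N).2) : ℂ)‖

/-- The Grassmannian constant `μ_{N,M}(ℂ)`: the infimum of the coherence over all
families of `N` unit vectors in `ℂ^M`. -/
noncomputable def grassmannianConst (N M : ℕ) : ℝ :=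
  ⨅ φ : {φ : Fin N → EuclideanSpace ℂ (Fin M) // ∀ j, ‖φ j‖ = 1},
    coherence (φ : Fin N → EuclideanSpace ℂ (Fin M))



private lemma smsm (f g : Fin 12 → ℝ) : ∑ j, ∑ l, f j * g l = (∑ j, f j) * (∑ j, g j) :=
  (Finset.sum_mul_sum _ _ _ _).symm

private lemma expand1 (x : Fin 12 → Fin 3 → ℝ) :
    ∑ j, ∑ l, (∑ a, x j a * x l a)
      = (∑ j, x j 0) ^ 2 + (∑ j, x j 1) ^ 2 + (∑ j, x j 2) ^ 2 := by
  have e : ∀ j l : Fin 12, (∑ a, x j a * x l a)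
      = (x j 0) * (x l 0) + (x j 1) * (x l 1) + (x j 2) * (x l 2) := by
    intro j l
    rw [Fin.sum_univ_three]
    try ring
  simp_rw [e, Finset.sum_add_distrib, smsm]
  try ring

private lemma expand2 (x : Fin 12 → Fin 3 → ℝ) :
    ∑ j, ∑ l, (∑ a, x j a * x l a) ^ 2
      = (∑ j, x j 0 ^ 2) ^ 2 + 2 * (∑ j, x j 0 * x j 1) ^ 2 + 2 * (∑ j, x j 0 * x j 2) ^ 2 + (∑ j, x j 1 ^ 2) ^ 2 + 2 * (∑ j, x j 1 * x j 2) ^ 2 + (∑ j, x j 2 ^ 2) ^ 2 := by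
  have e : ∀ j l : Fin 12, (∑ a, x j a * x l a) ^ 2
      = (x j 0 ^ 2) * (x l 0 ^ 2) + (2 * (x j 0 * x j 1)) * (x l 0 * x l 1) + (2 * (x j 0 * x j 2)) * (x l 0 * x l 2) + (x j 1 ^ 2) * (x l 1 ^ 2) + (2 * (x j 1 * x j 2)) * (x l 1 * x l 2) + (x j 2 ^ 2) * (x l 2 ^ 2) := by
    intro j l
    rw [Fin.sum_univ_three]
    try ring
  simp_rw [e, Finset.sum_add_distrib, smsm, ← Finset.mul_sum]
  try ring

private lemma expand3 (x : Fin 12 → Fin 3 → ℝ) :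
    ∑ j, ∑ l, (∑ a, x j a * x l a) ^ 3
      = (∑ j, x j 0 ^ 3) ^ 2 + 3 * (∑ j, x j 0 ^ 2 * x j 1) ^ 2 + 3 * (∑ j, x j 0 ^ 2 * x j 2) ^ 2 + 3 * (∑ j, x j 0 * x j 1 ^ 2) ^ 2 + 6 * (∑ j, x j 0 * x j 1 * x j 2) ^ 2 + 3 * (∑ j, x j 0 * x j 2 ^ 2) ^ 2 + (∑ j, x j 1 ^ 3) ^ 2 + 3 * (∑ j, x j 1 ^ 2 * x j 2) ^ 2 + 3 * (∑ j, x j 1 * x j 2 ^ 2) ^ 2 + (∑ j, x j 2 ^ 3) ^ 2 := by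
  have e : ∀ j l : Fin 12, (∑ a, x j a * x l a) ^ 3
      = (x j 0 ^ 3) * (x l 0 ^ 3) + (3 * (x j 0 ^ 2 * x j 1)) * (x l 0 ^ 2 * x l 1) + (3 * (x j 0 ^ 2 * x j 2)) * (x l 0 ^ 2 * x l 2) + (3 * (x j 0 * x j 1 ^ 2)) * (x l 0 * x l 1 ^ 2) + (6 * (x j 0 * x j 1 * x j 2)) * (x l 0 * x l 1 * x l 2) + (3 * (x j 0 * x j 2 ^ 2)) * (x l 0 * x l 2 ^ 2) + (x j 1 ^ 3) * (x l 1 ^ 3) + (3 * (x j 1 ^ 2 * x j 2)) * (x l 1 ^ 2 * x l 2) + (3 * (x j 1 * x j 2 ^ 2)) * (x l 1 * x l 2 ^ 2) + (x j 2 ^ 3) * (x l 2 ^ 3) := by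
    intro j l
    rw [Fin.sum_univ_three]
    try ring
  simp_rw [e, Finset.sum_add_distrib, smsm, ← Finset.mul_sum]
  try ring

private lemma expand4 (x : Fin 12 → Fin 3 → ℝ) :
    ∑ j, ∑ l, (∑ a, x j a * x l a) ^ 4
      = (∑ j, x j 0 ^ 4) ^ 2 + 4 * (∑ j, x j 0 ^ 3 * x j 1) ^ 2 + 4 * (∑ j, x j 0 ^ 3 * x j 2) ^ 2 + 6 * (∑ j, x j 0 ^ 2 * x j 1 ^ 2) ^ 2 + 12 * (∑ j, x j 0 ^ 2 * x j 1 * x j 2) ^ 2 + 6 * (∑ j, x j 0 ^ 2 * x j 2 ^ 2) ^ 2 + 4 * (∑ j, x j 0 * x j 1 ^ 3) ^ 2 + 12 * (∑ j, x j 0 * x j 1 ^ 2 * x j 2) ^ 2 + 12 * (∑ j, x j 0 * x j 1 * x j 2 ^ 2) ^ 2 + 4 * (∑ j, x j 0 * x j 2 ^ 3) ^ 2 + (∑ j, x j 1 ^ 4) ^ 2 + 4 * (∑ j, x j 1 ^ 3 * x j 2) ^ 2 + 6 * (∑ j, x j 1 ^ 2 * x j 2 ^ 2) ^ 2 + 4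 * (∑ j, x j 1 * x j 2 ^ 3) ^ 2 + (∑ j, x j 2 ^ 4) ^ 2 := by
  have e : ∀ j l : Fin 12, (∑ a, x j a * x l a) ^ 4
      = (x j 0 ^ 4) * (x l 0 ^ 4) + (4 * (x j 0 ^ 3 * x j 1)) * (x l 0 ^ 3 * x l 1) + (4 * (x j 0 ^ 3 * x j 2)) * (x l 0 ^ 3 * x l 2) + (6 * (x j 0 ^ 2 * x j 1 ^ 2)) * (x l 0 ^ 2 * x l 1 ^ 2) + (12 * (x j 0 ^ 2 * x j 1 * x j 2)) * (x l 0 ^ 2 * x l 1 * x l 2) + (6 * (x j 0 ^ 2 * x j 2 ^ 2)) * (x l 0 ^ 2 * x l 2 ^ 2) + (4 * (x j 0 * x j 1 ^ 3)) * (x l 0 * x l 1 ^ 3) + (12 * (x j 0 * x j 1 ^ 2 * x j 2)) * (x l 0 * x l 1 ^ 2 * x l 2) + (12 * (x j 0 * x j 1 * x j 2 ^ 2)) * (x l 0 * x l 1 * x l 2 ^ 2) + (4 * (x j 0 * x j 2 ^ 3)) * (x l 0 * x l 2 ^ 3) + (x j 1 ^ 4) * (x l 1 ^ 4) + (4 *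 (x j 1 ^ 3 * x j 2)) * (x l 1 ^ 3 * x l 2) + (6 * (x j 1 ^ 2 * x j 2 ^ 2)) * (x l 1 ^ 2 * x l 2 ^ 2) + (4 * (x j 1 * x j 2 ^ 3)) * (x l 1 * x l 2 ^ 3) + (x j 2 ^ 4) * (x l 2 ^ 4) := by
    intro j l
    rw [Fin.sum_univ_three]
    try ring
  simp_rw [e, Finset.sum_add_distrib, smsm, ← Finset.mul_sum]
  try ring


set_option maxHeartbeats 1000000 in
private lemma sos3 (a300 a030 a003 a210 a201 a120 a021 a102 a012 a111 : ℝ) :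
    3*((a300+a120+a102)^2+(a210+a030+a012)^2+(a201+a021+a003)^2) ≤ 5*(a300^2+a030^2+a003^2+3*(a210^2+a201^2+a120^2+a021^2+a102^2+a012^2)+6*a111^2) := by
  have key : 25*(a300^2+a030^2+a003^2+3*(a210^2+a201^2+a120^2+a021^2+a102^2+a012^2)+6*a111^2) - 15*((a300+a120+a102)^2+(a210+a030+a012)^2+(a201+a021+a003)^2)
      = (5*a300-3*(a300+a120+a102))^2 + (5*a030-3*(a210+a030+a012))^2 + (5*a003-3*(a201+a021+a003))^2 + 3*((5*a210-(a210+a030+a012))^2+(5*a201-(a201+a021+a003))^2+(5*a120-(a300+a120+a102))^2+(5*a102-(a300+a120+a102))^2+(5*a021-(a201+a021+a003))^2+(5*a012-(a210+a030+a012))^2) + 6*(5*a111)^2 := by ring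
  linarith [key, sq_nonneg (5*a300-3*(a300+a120+a102)), sq_nonneg (5*a030-3*(a210+a030+a012)), sq_nonneg (5*a003-3*(a201+a021+a003)),
    sq_nonneg (5*a210-(a210+a030+a012)), sq_nonneg (5*a201-(a201+a021+a003)), sq_nonneg (5*a120-(a300+a120+a102)), sq_nonneg (5*a102-(a300+a120+a102)),
    sq_nonneg (5*a021-(a201+a021+a003)), sq_nonneg (5*a012-(a210+a030+a012)), sq_nonneg (5*a111)]

set_option maxHeartbeats 1000000 in
private lemma sos4 (b400 b040 b004 b310 b301 b130 b031 b103 b013 b220 b202 b022 b211 b121 b112 : ℝ)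
    (h : (b400+b220+b202)+(b220+b040+b022)+(b202+b022+b004) = 12) :
    30*((b400+b220+b202)^2+(b220+b040+b022)^2+(b202+b022+b004)^2+2*((b310+b130+b112)^2+(b301+b121+b103)^2+(b211+b031+b013)^2)) ≤ 35*(b400^2+b040^2+b004^2+4*(b310^2+b301^2+b130^2+b031^2+b103^2+b013^2)+6*(b220^2+b202^2+b022^2)+12*(b211^2+b121^2+b112^2)) + 432 := by
  have key : 1225*(b400^2+b040^2+b004^2+4*(b310^2+b301^2+b130^2+b031^2+b103^2+b013^2)+6*(b220^2+b202^2+b022^2)+12*(b211^2+b121^2+b112^2)) - 1050*((b400+b220+b202)^2+(b220+b040+b022)^2+(b202+b022+b004)^2+2*((b310+b130+b112)^2+(b301+b121+b103)^2+(b211+b031+b013)^2)) + 4536 + 6*(5*((b400+b220+b202)+(b220+b040+b022)+(b202+b022+b004))-18)^2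
      = (35*b400-30*(b400+b220+b202)+36)^2 + (35*b040-30*(b220+b040+b022)+36)^2 + (35*b004-30*(b202+b022+b004)+36)^2 + 4*((35*b310-15*(b310+b130+b112))^2+(35*b130-15*(b310+b130+b112))^2+(35*b301-15*(b301+b121+b103))^2+(35*b103-15*(b301+b121+b103))^2+(35*b031-15*(b211+b031+b013))^2+(35*b013-15*(b211+b031+b013))^2) + 6*((35*b220-5*(b400+b220+b202)-5*(b220+b040+b022)+12)^2+(35*b202-5*(b400+b220+b202)-5*(b202+b022+b004)+12)^2+(35*b022-5*(b220+b040+b022)-5*(b202+b022+b004)+12)^2) + 12*((35*b211-5*(b211+b031+b013))^2+(35*b121-5*(b301+b121+b103))^2+(35*b112-5*(b310+b130+b112))^2) := by ring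
  have h2 : (5*((b400+b220+b202)+(b220+b040+b022)+(b202+b022+b004))-18)^2 = 1764 := by rw [h]; norm_num
  linarith [key, h2, sq_nonneg (35*b400-30*(b400+b220+b202)+36), sq_nonneg (35*b040-30*(b220+b040+b022)+36),
    sq_nonneg (35*b004-30*(b202+b022+b004)+36),
    sq_nonneg (35*b310-15*(b310+b130+b112)), sq_nonneg (35*b130-15*(b310+b130+b112)), sq_nonneg (35*b301-15*(b301+b121+b103)),
    sq_nonneg (35*b103-15*(b301+b121+b103)), sq_nonneg (35*b031-15*(b211+b031+b013)), sq_nonneg (35*b013-15*(b211+b031+b013)),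
    sq_nonneg (35*b220-5*(b400+b220+b202)-5*(b220+b040+b022)+12), sq_nonneg (35*b202-5*(b400+b220+b202)-5*(b202+b022+b004)+12),
    sq_nonneg (35*b022-5*(b220+b040+b022)-5*(b202+b022+b004)+12),
    sq_nonneg (35*b211-5*(b211+b031+b013)), sq_nonneg (35*b121-5*(b301+b121+b103)), sq_nonneg (35*b112-5*(b310+b130+b112))]

set_option maxHeartbeats 2000000 in
private lemma sphere12 (x : Fin 12 → Fin 3 → ℝ)
    (hx : ∀ j, x j 0 ^ 2 + x j 1 ^ 2 + x j 2 ^ 2 = 1)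
    (hlt : ∀ j l : Fin 12, j ≠ l →
      x j 0 * x l 0 + x j 1 * x l 1 + x j 2 * x l 2 < Real.sqrt 5 / 5) : False := by
  set s := Real.sqrt 5 with hsdef
  have hs0 : 0 ≤ s := Real.sqrt_nonneg 5
  have hs2 : s ^ 2 = 5 := Real.sq_sqrt (by norm_num)
  have hs_lb : 2 ≤ s := by nlinarith
  have hs_ub : s ≤ 3 := by nlinarith
  -- bridge tool
  have hbr : ∀ g m0 m1 m2 : Fin 12 → ℝ,
      (∀ j, g j * (x j 0 ^ 2 + x j 1 ^ 2 + x j 2 ^ 2) = m0 j + m1 j + m2 j) →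
      (∑ j, m0 j) + (∑ j, m1 j) + (∑ j, m2 j) = ∑ j, g j := by
    intro g m0 m1 m2 hm
    rw [← Finset.sum_add_distrib, ← Finset.sum_add_distrib]
    refine Finset.sum_congr rfl fun j _ => ?_
    rw [← hm j, hx j, mul_one]
  have br100 : (∑ j, x j 0 ^ 3) + (∑ j, x j 0 * x j 1 ^ 2) + (∑ j, x j 0 * x j 2 ^ 2)
      = ∑ j, x j 0 := hbr _ _ _ _ (fun j => by ring)
  have br010 : (∑ j, x j 0 ^ 2 * x j 1) + (∑ j, x j 1 ^ 3) + (∑ j, x j 1 * x j 2 ^ 2)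
      = ∑ j, x j 1 := hbr _ _ _ _ (fun j => by ring)
  have br001 : (∑ j, x j 0 ^ 2 * x j 2) + (∑ j, x j 1 ^ 2 * x j 2) + (∑ j, x j 2 ^ 3)
      = ∑ j, x j 2 := hbr _ _ _ _ (fun j => by ring)
  have br200 : (∑ j, x j 0 ^ 4) + (∑ j, x j 0 ^ 2 * x j 1 ^ 2) + (∑ j, x j 0 ^ 2 * x j 2 ^ 2)
      = ∑ j, x j 0 ^ 2 := hbr _ _ _ _ (fun j => by ring)
  have br020 : (∑ j, x j 0 ^ 2 * x j 1 ^ 2) + (∑ j, x j 1 ^ 4) + (∑ j, x j 1 ^ 2 * x j 2 ^ 2)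
      = ∑ j, x j 1 ^ 2 := hbr _ _ _ _ (fun j => by ring)
  have br002 : (∑ j, x j 0 ^ 2 * x j 2 ^ 2) + (∑ j, x j 1 ^ 2 * x j 2 ^ 2) + (∑ j, x j 2 ^ 4)
      = ∑ j, x j 2 ^ 2 := hbr _ _ _ _ (fun j => by ring)
  have br110 : (∑ j, x j 0 ^ 3 * x j 1) + (∑ j, x j 0 * x j 1 ^ 3) + (∑ j, x j 0 * x j 1 * x j 2 ^ 2)
      = ∑ j, x j 0 * x j 1 := hbr _ _ _ _ (fun j => by ring)
  have br101 : (∑ j, x j 0 ^ 3 * x j 2) + (∑ j, x j 0 * x j 1 ^ 2 * x j 2) + (∑ j, x j 0 * x j 2 ^ 3)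
      = ∑ j, x j 0 * x j 2 := hbr _ _ _ _ (fun j => by ring)
  have br011 : (∑ j, x j 0 ^ 2 * x j 1 * x j 2) + (∑ j, x j 1 ^ 3 * x j 2) + (∑ j, x j 1 * x j 2 ^ 3)
      = ∑ j, x j 1 * x j 2 := hbr _ _ _ _ (fun j => by ring)
  have trace : (∑ j, x j 0 ^ 2) + (∑ j, x j 1 ^ 2) + (∑ j, x j 2 ^ 2) = 12 := by
    rw [← Finset.sum_add_distrib, ← Finset.sum_add_distrib]
    rw [Finset.sum_congr rfl fun j (_ : j ∈ Finset.univ) => hx j]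
    simp
  -- the four positive-definiteness inequalities
  have E1 := expand1 x
  have E2 := expand2 x
  have E3 := expand3 x
  have E4 := expand4 x
  have hS1 : 0 ≤ ∑ j, ∑ l, (∑ a, x j a * x l a) := by rw [E1]; positivity
  have hS2 : 48 ≤ ∑ j, ∑ l, (∑ a, x j a * x l a) ^ 2 := by
    rw [E2]
    have h144 : ((∑ j, x j 0 ^ 2) + (∑ j, x j 1 ^ 2) + (∑ j, x j 2 ^ 2)) ^ 2 = 144 := by
      rw [trace]; norm_num
    have key2 : 3*((∑ j, x j 0 ^ 2)^2+(∑ j, x j 1 ^ 2)^2+(∑ j, x j 2 ^ 2)^2) - ((∑ j, x j 0 ^ 2)+(∑ j, x j 1 ^ 2)+(∑ j, x j 2 ^ 2))^2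
        = ((∑ j, x j 0 ^ 2)-(∑ j, x j 1 ^ 2))^2 + ((∑ j, x j 0 ^ 2)-(∑ j, x j 2 ^ 2))^2 + ((∑ j, x j 1 ^ 2)-(∑ j, x j 2 ^ 2))^2 := by ring
    linarith only [h144, key2, sq_nonneg ((∑ j, x j 0 ^ 2)-(∑ j, x j 1 ^ 2)), sq_nonneg ((∑ j, x j 0 ^ 2)-(∑ j, x j 2 ^ 2)), sq_nonneg ((∑ j, x j 1 ^ 2)-(∑ j, x j 2 ^ 2)),
      sq_nonneg (∑ j, x j 0 * x j 1), sq_nonneg (∑ j, x j 0 * x j 2), sq_nonneg (∑ j, x j 1 * x j 2)]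
  have hS3 : 3 * (∑ j, ∑ l, (∑ a, x j a * x l a)) ≤ 5 * ∑ j, ∑ l, (∑ a, x j a * x l a) ^ 3 := by
    have hI3 := sos3 (∑ j, x j 0 ^ 3) (∑ j, x j 1 ^ 3) (∑ j, x j 2 ^ 3)
      (∑ j, x j 0 ^ 2 * x j 1) (∑ j, x j 0 ^ 2 * x j 2) (∑ j, x j 0 * x j 1 ^ 2)
      (∑ j, x j 1 ^ 2 * x j 2) (∑ j, x j 0 * x j 2 ^ 2) (∑ j, x j 1 * x j 2 ^ 2)
      (∑ j, x j 0 * x j 1 * x j 2)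
    rw [br100, br010, br001] at hI3
    rw [E1, E3]
    linarith only [hI3]
  have hS4 : 30 * (∑ j, ∑ l, (∑ a, x j a * x l a) ^ 2)
      ≤ 35 * (∑ j, ∑ l, (∑ a, x j a * x l a) ^ 4) + 432 := by
    have hq : ((∑ j, x j 0 ^ 4) + (∑ j, x j 0 ^ 2 * x j 1 ^ 2) + (∑ j, x j 0 ^ 2 * x j 2 ^ 2))
        + ((∑ j, x j 0 ^ 2 * x j 1 ^ 2) + (∑ j, x j 1 ^ 4) + (∑ j, x j 1 ^ 2 * x j 2 ^ 2))
        + ((∑ j, x j 0 ^ 2 * x j 2 ^ 2) + (∑ j, x j 1 ^ 2 * x j 2 ^ 2) + (∑ j, x j 2 ^ 4)) = 12 := by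
      rw [br200, br020, br002]; exact trace
    have hI4 := sos4 (∑ j, x j 0 ^ 4) (∑ j, x j 1 ^ 4) (∑ j, x j 2 ^ 4)
      (∑ j, x j 0 ^ 3 * x j 1) (∑ j, x j 0 ^ 3 * x j 2) (∑ j, x j 0 * x j 1 ^ 3)
      (∑ j, x j 1 ^ 3 * x j 2) (∑ j, x j 0 * x j 2 ^ 3) (∑ j, x j 1 * x j 2 ^ 3)
      (∑ j, x j 0 ^ 2 * x j 1 ^ 2) (∑ j, x j 0 ^ 2 * x j 2 ^ 2) (∑ j, x j 1 ^ 2 * x j 2 ^ 2)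
      (∑ j, x j 0 ^ 2 * x j 1 * x j 2) (∑ j, x j 0 * x j 1 ^ 2 * x j 2) (∑ j, x j 0 * x j 1 * x j 2 ^ 2)
      hq
    rw [br200, br020, br002, br110, br101, br011] at hI4
    rw [E2, E4]
    linarith only [hI4]
  -- certificate polynomial arguments
  have hq : (s/5)^2 = (1:ℝ)/5 := by rw [div_pow, hs2]; norm_num
  have hsum : ∑ j, ∑ l, (((∑ a, x j a * x l a)) + 1) * (((∑ a, x j a * x l a)) + s/5) ^ 2 * (((∑ a, x j a * x l a)) - s/5)
      = (∑ j, ∑ l, (∑ a, x j a * x l a) ^ 4) + (1+s/5) * (∑ j, ∑ l, (∑ a, x j a * x l a) ^ 3)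
        + (s/5-1/5) * (∑ j, ∑ l, (∑ a, x j a * x l a) ^ 2)
        - ((1+s/5)/5) * (∑ j, ∑ l, (∑ a, x j a * x l a)) - 144*(s/25) := by
    have hf : ∀ j l : Fin 12, (((∑ a, x j a * x l a)) + 1) * (((∑ a, x j a * x l a)) + s/5) ^ 2 * (((∑ a, x j a * x l a)) - s/5)
        = (∑ a, x j a * x l a) ^ 4 + (1+s/5) * (∑ a, x j a * x l a) ^ 3 + (s/5-1/5) * (∑ a, x j a * x l a) ^ 2
          - ((1+s/5)/5) * (∑ a, x j a * x l a) - s/25 := by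
      intro j l
      linear_combination (-(((∑ a, x j a * x l a)+1)*((∑ a, x j a * x l a)+s/5))) * hq
    simp_rw [hf]
    simp only [Finset.sum_add_distrib, Finset.sum_sub_distrib, ← Finset.mul_sum,
      Finset.sum_const, Finset.card_univ, Fintype.card_fin, nsmul_eq_mul]
    push_cast
    ring
  have hdiag : ∀ j : Fin 12, (((∑ a, x j a * x j a)) + 1) * (((∑ a, x j a * x j a)) + s/5) ^ 2 * (((∑ a, x j a * x j a)) - s/5) = 8/5*(1+s/5) := by
    intro j
    have ht1 : (∑ a, x j a * x j a) = 1 := by rw [Fin.sum_univ_three]; linear_combination hx j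
    rw [ht1]
    linear_combination (-2*(1+s/5)) * hq
  have hFtotal : 12*(8/5*(1+s/5)) ≤ ∑ j, ∑ l, (((∑ a, x j a * x l a)) + 1) * (((∑ a, x j a * x l a)) + s/5) ^ 2 * (((∑ a, x j a * x l a)) - s/5) := by
    rw [hsum]
    have p1 : 0 ≤ s * ((∑ j, ∑ l, (∑ a, x j a * x l a) ^ 2) - 48) := mul_nonneg hs0 (by linarith only [hS2, hS3])
    have p2 : 0 ≤ s * (5 * (∑ j, ∑ l, (∑ a, x j a * x l a) ^ 3) - 3 * (∑ j, ∑ l, (∑ a, x j a * x l a))) :=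
      mul_nonneg hs0 (by linarith only [hS2, hS3])
    have p3 : 0 ≤ s * (∑ j, ∑ l, (∑ a, x j a * x l a)) := mul_nonneg hs0 hS1
    linarith only [hS1, hS2, hS3, hS4, p1, p2, p3]
  have hdecomp : ∑ j, ∑ l, (((∑ a, x j a * x l a)) + 1) * (((∑ a, x j a * x l a)) + s/5) ^ 2 * (((∑ a, x j a * x l a)) - s/5)
      = (∑ j, ∑ l ∈ Finset.univ.erase j, (((∑ a, x j a * x l a)) + 1) * (((∑ a, x j a * x l a)) + s/5) ^ 2 * (((∑ a, x j a * x l a)) - s/5)) + ∑ j, (((∑ a, x j a * x j a)) + 1) * (((∑ a, x j a * x j a)) + s/5) ^ 2 * (((∑ a, x j a * x j a)) - s/5) := by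
    rw [← Finset.sum_add_distrib]
    exact Finset.sum_congr rfl fun j _ => (Finset.sum_erase_add _ _ (Finset.mem_univ j)).symm
  have hd2 : ∑ j, (((∑ a, x j a * x j a)) + 1) * (((∑ a, x j a * x j a)) + s/5) ^ 2 * (((∑ a, x j a * x j a)) - s/5) = 12*(8/5*(1+s/5)) := by
    rw [Finset.sum_congr rfl fun j (_ : j ∈ Finset.univ) => hdiag j]
    simp [Finset.sum_const, Finset.card_univ]
    try ring
  have hoff : 0 ≤ ∑ j, ∑ l ∈ Finset.univ.erase j, (((∑ a, x j a * x l a)) + 1) * (((∑ a, x j a * x l a)) + s/5) ^ 2 * (((∑ a, x j a * x l a)) - s/5) := by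
    linarith only [hFtotal, hdecomp, hd2]
  have hpair : ∀ j l : Fin 12, j ≠ l → (((∑ a, x j a * x l a)) + 1) * (((∑ a, x j a * x l a)) + s/5) ^ 2 * (((∑ a, x j a * x l a)) - s/5) ≤ 0 := by
    intro j l hjl
    have hcs := Finset.sum_mul_sq_le_sq_mul_sq Finset.univ (x j) (x l)
    have hxj : (∑ a, x j a ^ 2) = 1 := by rw [Fin.sum_univ_three]; exact hx j
    have hxl : (∑ a, x l a ^ 2) = 1 := by rw [Fin.sum_univ_three]; exact hx l
    rw [hxj, hxl, mul_one] at hcs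
    have hm1 : -1 ≤ (∑ a, x j a * x l a) := by linarith only [hcs, sq_nonneg ((∑ a, x j a * x l a) + 1)]
    have hup : (∑ a, x j a * x l a) < s/5 := by rw [Fin.sum_univ_three]; exact hlt j l hjl
    have h1 : 0 ≤ ((∑ a, x j a * x l a) + 1) * ((∑ a, x j a * x l a) + s/5) ^ 2 :=
      mul_nonneg (by linarith only [hm1]) (sq_nonneg _)
    exact mul_nonpos_of_nonneg_of_nonpos h1 (by linarith only [hup])
  have hinner_nonpos : ∀ j : Fin 12, ∑ l ∈ Finset.univ.erase j, (((∑ a, x j a * x l a)) + 1) * (((∑ a, x j a * x l a)) + s/5) ^ 2 * (((∑ a, x j a * x l a)) - s/5) ≤ 0 :=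
    fun j => Finset.sum_nonpos fun l hl => hpair j l (Finset.ne_of_mem_erase hl).symm
  have htot : ∑ j, ∑ l ∈ Finset.univ.erase j, (((∑ a, x j a * x l a)) + 1) * (((∑ a, x j a * x l a)) + s/5) ^ 2 * (((∑ a, x j a * x l a)) - s/5) = 0 :=
    le_antisymm (Finset.sum_nonpos fun j _ => hinner_nonpos j) hoff
  have hzero : ∀ j : Fin 12, ∀ l ∈ Finset.univ.erase j, (((∑ a, x j a * x l a)) + 1) * (((∑ a, x j a * x l a)) + s/5) ^ 2 * (((∑ a, x j a * x l a)) - s/5) = 0 := by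
    intro j l hl
    have hj := (Finset.sum_eq_zero_iff_of_nonpos (fun j _ => hinner_nonpos j)).mp htot j
      (Finset.mem_univ j)
    exact (Finset.sum_eq_zero_iff_of_nonpos
      (fun l hl => hpair j l (Finset.ne_of_mem_erase hl).symm)).mp hj l hl
  have hta : ∀ j : Fin 12, ∀ l ∈ Finset.univ.erase j, (∑ a, x j a * x l a) ≤ -(s/5) := by
    intro j l hl
    have h0 := hzero j l hl
    have hjl : j ≠ l := (Finset.ne_of_mem_erase hl).symm
    have hup : (∑ a, x j a * x l a) < s/5 := by rw [Fin.sum_univ_three]; exact hlt j l hjl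
    rcases mul_eq_zero.mp h0 with h1 | h2
    · rcases mul_eq_zero.mp h1 with h3 | h4
      · linarith only [h3, hs_ub]
      · have h5 : (∑ a, x j a * x l a) + s/5 = 0 := sq_eq_zero_iff.mp h4
        linarith only [h5]
    · linarith only [h2, hup]
  have hrow : ∀ j : Fin 12, ∑ l ∈ Finset.univ.erase j, (∑ a, x j a * x l a) ≤ 11 * (-(s/5)) := by
    intro j
    calc ∑ l ∈ Finset.univ.erase j, (∑ a, x j a * x l a)
        ≤ ∑ _l ∈ Finset.univ.erase j, (-(s/5)) := Finset.sum_le_sum (hta j)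
      _ = 11 * (-(s/5)) := by
          rw [Finset.sum_const, Finset.card_erase_of_mem (Finset.mem_univ j)]
          simp [Finset.card_univ]
          try ring
  have hengine : ∑ j, ∑ l ∈ Finset.univ.erase j, (∑ a, x j a * x l a) ≤ 12 * (11 * (-(s/5))) := by
    calc ∑ j, ∑ l ∈ Finset.univ.erase j, (∑ a, x j a * x l a)
        ≤ ∑ _j : Fin 12, 11 * (-(s/5)) := Finset.sum_le_sum (fun j _ => hrow j)
      _ = 12 * (11 * (-(s/5))) := by
          rw [Finset.sum_const, Finset.card_univ]
          simp
          try ring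
  have hTdiagval : ∀ j : Fin 12, (∑ a, x j a * x j a) = 1 := by
    intro j; rw [Fin.sum_univ_three]; linear_combination hx j
  have hTdiag : ∑ j, (∑ a, x j a * x j a) = 12 := by
    rw [Finset.sum_congr rfl fun j (_ : j ∈ Finset.univ) => hTdiagval j]
    simp
  have hdecT : ∑ j, ∑ l, (∑ a, x j a * x l a)
      = (∑ j, ∑ l ∈ Finset.univ.erase j, (∑ a, x j a * x l a)) + ∑ j, (∑ a, x j a * x j a) := by
    rw [← Finset.sum_add_distrib]
    exact Finset.sum_congr rfl fun j _ => (Finset.sum_erase_add _ _ (Finset.mem_univ j)).symm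
  linarith only [hS1, hengine, hTdiag, hdecT, hs_lb]

private noncomputable def bloch (u : EuclideanSpace ℂ (Fin 2)) : Fin 3 → ℝ :=
  ![2 * ((u 0) * (starRingEnd ℂ) (u 1)).re, 2 * ((u 0) * (starRingEnd ℂ) (u 1)).im,
    Complex.normSq (u 0) - Complex.normSq (u 1)]

private lemma unit_normSq (u : EuclideanSpace ℂ (Fin 2)) (hu : ‖u‖ = 1) :
    Complex.normSq (u 0) + Complex.normSq (u 1) = 1 := by
  rw [EuclideanSpace.norm_eq, Real.sqrt_eq_one] at hu
  simpa [Fin.sum_univ_two, Complex.sq_norm] using hu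

private lemma inner_normSq (u v : EuclideanSpace ℂ (Fin 2)) :
    ‖(inner ℂ u v : ℂ)‖ ^ 2
      = Complex.normSq ((starRingEnd ℂ) (u 0) * v 0 + (starRingEnd ℂ) (u 1) * v 1) := by
  have : (inner ℂ u v : ℂ) = (starRingEnd ℂ) (u 0) * v 0 + (starRingEnd ℂ) (u 1) * v 1 := by
    rw [PiLp.inner_apply]; simp [RCLike.inner_apply, Fin.sum_univ_two]; ring
  rw [this, Complex.sq_norm]

private lemma bloch_unit (u : EuclideanSpace ℂ (Fin 2)) (hu : ‖u‖ = 1) :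
    bloch u 0 ^ 2 + bloch u 1 ^ 2 + bloch u 2 ^ 2 = 1 := by
  have h := unit_normSq u hu
  simp only [bloch, Matrix.cons_val_zero, Matrix.cons_val_one, Matrix.head_cons,
    Matrix.cons_val_two, Matrix.tail_cons]
  simp only [Complex.normSq_apply, Complex.mul_re, Complex.mul_im,
    Complex.conj_re, Complex.conj_im] at h ⊢
  linear_combination ((u 0).re ^ 2 + (u 0).im ^ 2 + (u 1).re ^ 2 + (u 1).im ^ 2 + 1) * h

private lemma bloch_inner (u v : EuclideanSpace ℂ (Fin 2)) (hu : ‖u‖ = 1) (hv : ‖v‖ = 1) :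
    bloch u 0 * bloch v 0 + bloch u 1 * bloch v 1 + bloch u 2 * bloch v 2
      = 2 * ‖(inner ℂ u v : ℂ)‖ ^ 2 - 1 := by
  have hU := unit_normSq u hu
  have hV := unit_normSq v hv
  rw [inner_normSq]
  simp only [bloch, Matrix.cons_val_zero, Matrix.cons_val_one, Matrix.head_cons,
    Matrix.cons_val_two, Matrix.tail_cons]
  simp only [Complex.normSq_apply, Complex.mul_re, Complex.mul_im, Complex.add_re,
    Complex.add_im, Complex.conj_re, Complex.conj_im] at hU hV ⊢
  linear_combination ((v 0).re ^ 2 + (v 0).im ^ 2 + (v 1).re ^ 2 + (v 1).im ^ 2) * hU + hV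
    - 2 * ((v 0).re * (v 0).re + (v 0).im * (v 0).im + ((v 1).re * (v 1).re + (v 1).im * (v 1).im)) * hU
    - 2 * hV

private noncomputable def lift (X Y Z : ℝ) : EuclideanSpace ℂ (Fin 2) :=
  WithLp.toLp 2 ![(Real.sqrt ((1 + Z) / 2) : ℂ),
    (⟨X / (2 * Real.sqrt ((1 + Z) / 2)), -Y / (2 * Real.sqrt ((1 + Z) / 2))⟩ : ℂ)]

private lemma lift_spec (X Y Z : ℝ) (hZ : -1 < Z) (h1 : X ^ 2 + Y ^ 2 + Z ^ 2 = 1) :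
    ‖lift X Y Z‖ = 1 ∧ bloch (lift X Y Z) 0 = X ∧ bloch (lift X Y Z) 1 = Y
      ∧ bloch (lift X Y Z) 2 = Z := by
  set c := Real.sqrt ((1 + Z) / 2) with hc
  have hcpos : 0 < c := Real.sqrt_pos.mpr (by linarith)
  have hcne : c ≠ 0 := ne_of_gt hcpos
  have hc2 : c ^ 2 = (1 + Z) / 2 := Real.sq_sqrt (by linarith)
  have h0 : (lift X Y Z) 0 = (c : ℂ) := rfl
  have h1' : (lift X Y Z) 1 = (⟨X / (2 * c), -Y / (2 * c)⟩ : ℂ) := rfl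
  have hXY : X ^ 2 + Y ^ 2 = (1 - Z) * (1 + Z) := by linarith [h1]
  have hns : Complex.normSq ((lift X Y Z) 0) = c ^ 2 := by
    rw [h0]; simp [Complex.normSq_apply]; ring
  have hZne : (1:ℝ) + Z ≠ 0 := by linarith
  have hns1 : Complex.normSq ((lift X Y Z) 1) = (1 - Z) / 2 := by
    rw [h1', Complex.normSq_mk]
    have e1 : X / (2*c) * (X / (2*c)) + -Y/(2*c) * (-Y/(2*c)) = (X^2+Y^2)/(4*c^2) := by
      field_simp
      ring
    rw [e1, hXY, hc2]
    rw [div_eq_div_iff (by positivity) (by norm_num : (2:ℝ) ≠ 0)]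
    ring
  constructor
  · rw [EuclideanSpace.norm_eq, Real.sqrt_eq_one]
    have he : ∀ i : Fin 2, ‖(lift X Y Z) i‖ ^ 2 = Complex.normSq ((lift X Y Z) i) := fun i => by
      rw [Complex.sq_norm]
    rw [Fin.sum_univ_two, he 0, he 1, hns, hns1, hc2]
    ring
  refine ⟨?_, ?_, ?_⟩
  · show 2 * (((lift X Y Z) 0) * (starRingEnd ℂ) ((lift X Y Z) 1)).re = X
    rw [h0, h1']
    simp [Complex.mul_re, Complex.conj_re, Complex.conj_im]
    field_simp
  · show 2 * (((lift X Y Z) 0) * (starRingEnd ℂ) ((lift X Y Z) 1)).im = Y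
    rw [h0, h1']
    simp [Complex.mul_im, Complex.conj_re, Complex.conj_im]
    field_simp
  · show Complex.normSq ((lift X Y Z) 0) - Complex.normSq ((lift X Y Z) 1) = Z
    rw [hns, hns1, hc2]
    ring

private noncomputable def icg : ℝ := (1 + Real.sqrt 5) / 2

private noncomputable def icosQ : Fin 12 → Fin 3 → ℝ :=
  ![![0, 1, icg], ![0, 1, -icg], ![0, -1, icg], ![0, -1, -icg],
    ![1, icg, 0], ![1, -icg, 0], ![-1, icg, 0], ![-1, -icg, 0],
    ![icg, 0, 1], ![icg, 0, -1], ![-icg, 0, 1], ![-icg, 0, -1]]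

private lemma icg_sq : icg ^ 2 = icg + 1 := by
  have h : Real.sqrt 5 ^ 2 = 5 := Real.sq_sqrt (by norm_num)
  unfold icg
  linear_combination (1/4 : ℝ) * h

private lemma icg_gt : 1 < icg := by
  have h0 : (2:ℝ) ≤ Real.sqrt 5 := by
    nlinarith [Real.sq_sqrt (show (0:ℝ) ≤ 5 by norm_num), Real.sqrt_nonneg 5]
  unfold icg
  linarith

private lemma icosQ_norm : ∀ j : Fin 12, icosQ j 0 ^ 2 + icosQ j 1 ^ 2 + icosQ j 2 ^ 2 = icg + 2 := by
  have hg := icg_sq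
  intro j
  fin_cases j
  · show (0 : ℝ) ^ 2 + (1) ^ 2 + (icg) ^ 2 = icg + 2
    linarith [hg]
  · show (0 : ℝ) ^ 2 + (1) ^ 2 + (-icg) ^ 2 = icg + 2
    linarith [hg]
  · show (0 : ℝ) ^ 2 + (-1) ^ 2 + (icg) ^ 2 = icg + 2
    linarith [hg]
  · show (0 : ℝ) ^ 2 + (-1) ^ 2 + (-icg) ^ 2 = icg + 2
    linarith [hg]
  · show (1 : ℝ) ^ 2 + (icg) ^ 2 + (0) ^ 2 = icg + 2
    linarith [hg]
  · show (1 : ℝ) ^ 2 + (-icg) ^ 2 + (0) ^ 2 = icg + 2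
    linarith [hg]
  · show (-1 : ℝ) ^ 2 + (icg) ^ 2 + (0) ^ 2 = icg + 2
    linarith [hg]
  · show (-1 : ℝ) ^ 2 + (-icg) ^ 2 + (0) ^ 2 = icg + 2
    linarith [hg]
  · show (icg : ℝ) ^ 2 + (0) ^ 2 + (1) ^ 2 = icg + 2
    linarith [hg]
  · show (icg : ℝ) ^ 2 + (0) ^ 2 + (-1) ^ 2 = icg + 2
    linarith [hg]
  · show (-icg : ℝ) ^ 2 + (0) ^ 2 + (1) ^ 2 = icg + 2
    linarith [hg]
  · show (-icg : ℝ) ^ 2 + (0) ^ 2 + (-1) ^ 2 = icg + 2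
    linarith [hg]

private lemma icosQ_z : ∀ j : Fin 12, icosQ j 2 ^ 2 ≤ icg + 1 := by
  have hg := icg_sq
  have hg1 := icg_gt
  intro j
  fin_cases j
  · show ((icg : ℝ)) ^ 2 ≤ icg + 1
    linarith [hg, hg1]
  · show ((-icg : ℝ)) ^ 2 ≤ icg + 1
    linarith [hg, hg1]
  · show ((icg : ℝ)) ^ 2 ≤ icg + 1
    linarith [hg, hg1]
  · show ((-icg : ℝ)) ^ 2 ≤ icg + 1
    linarith [hg, hg1]
  · show ((0 : ℝ)) ^ 2 ≤ icg + 1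
    linarith [hg, hg1]
  · show ((0 : ℝ)) ^ 2 ≤ icg + 1
    linarith [hg, hg1]
  · show ((0 : ℝ)) ^ 2 ≤ icg + 1
    linarith [hg, hg1]
  · show ((0 : ℝ)) ^ 2 ≤ icg + 1
    linarith [hg, hg1]
  · show ((1 : ℝ)) ^ 2 ≤ icg + 1
    linarith [hg, hg1]
  · show ((-1 : ℝ)) ^ 2 ≤ icg + 1
    linarith [hg, hg1]
  · show ((1 : ℝ)) ^ 2 ≤ icg + 1
    linarith [hg, hg1]
  · show ((-1 : ℝ)) ^ 2 ≤ icg + 1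
    linarith [hg, hg1]

set_option maxHeartbeats 3000000 in
private lemma icosQ_dot : ∀ j l : Fin 12, j ≠ l →
    icosQ j 0 * icosQ l 0 + icosQ j 1 * icosQ l 1 + icosQ j 2 * icosQ l 2 ≤ icg := by
  have hg := icg_sq
  have hg1 := icg_gt
  intro j l hjl
  fin_cases j <;> fin_cases l
  · exact absurd rfl hjl
  · show (0 : ℝ) * (0) + (1) * (1) + (icg) * (-icg) ≤ icg
    nlinarith [hg, hg1]
  · show (0 : ℝ) * (0) + (1) * (-1) + (icg) * (icg) ≤ icg
    nlinarith [hg, hg1]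
  · show (0 : ℝ) * (0) + (1) * (-1) + (icg) * (-icg) ≤ icg
    nlinarith [hg, hg1]
  · show (0 : ℝ) * (1) + (1) * (icg) + (icg) * (0) ≤ icg
    nlinarith [hg, hg1]
  · show (0 : ℝ) * (1) + (1) * (-icg) + (icg) * (0) ≤ icg
    nlinarith [hg, hg1]
  · show (0 : ℝ) * (-1) + (1) * (icg) + (icg) * (0) ≤ icg
    nlinarith [hg, hg1]
  · show (0 : ℝ) * (-1) + (1) * (-icg) + (icg) * (0) ≤ icg
    nlinarith [hg, hg1]
  · show (0 : ℝ) * (icg) + (1) * (0) + (icg) * (1) ≤ icg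
    nlinarith [hg, hg1]
  · show (0 : ℝ) * (icg) + (1) * (0) + (icg) * (-1) ≤ icg
    nlinarith [hg, hg1]
  · show (0 : ℝ) * (-icg) + (1) * (0) + (icg) * (1) ≤ icg
    nlinarith [hg, hg1]
  · show (0 : ℝ) * (-icg) + (1) * (0) + (icg) * (-1) ≤ icg
    nlinarith [hg, hg1]
  · show (0 : ℝ) * (0) + (1) * (1) + (-icg) * (icg) ≤ icg
    nlinarith [hg, hg1]
  · exact absurd rfl hjl
  · show (0 : ℝ) * (0) + (1) * (-1) + (-icg) * (icg) ≤ icg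
    nlinarith [hg, hg1]
  · show (0 : ℝ) * (0) + (1) * (-1) + (-icg) * (-icg) ≤ icg
    nlinarith [hg, hg1]
  · show (0 : ℝ) * (1) + (1) * (icg) + (-icg) * (0) ≤ icg
    nlinarith [hg, hg1]
  · show (0 : ℝ) * (1) + (1) * (-icg) + (-icg) * (0) ≤ icg
    nlinarith [hg, hg1]
  · show (0 : ℝ) * (-1) + (1) * (icg) + (-icg) * (0) ≤ icg
    nlinarith [hg, hg1]
  · show (0 : ℝ) * (-1) + (1) * (-icg) + (-icg) * (0) ≤ icg
    nlinarith [hg, hg1]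
  · show (0 : ℝ) * (icg) + (1) * (0) + (-icg) * (1) ≤ icg
    nlinarith [hg, hg1]
  · show (0 : ℝ) * (icg) + (1) * (0) + (-icg) * (-1) ≤ icg
    nlinarith [hg, hg1]
  · show (0 : ℝ) * (-icg) + (1) * (0) + (-icg) * (1) ≤ icg
    nlinarith [hg, hg1]
  · show (0 : ℝ) * (-icg) + (1) * (0) + (-icg) * (-1) ≤ icg
    nlinarith [hg, hg1]
  · show (0 : ℝ) * (0) + (-1) * (1) + (icg) * (icg) ≤ icg
    nlinarith [hg, hg1]
  · show (0 : ℝ) * (0) + (-1) * (1) + (icg) * (-icg) ≤ icg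
    nlinarith [hg, hg1]
  · exact absurd rfl hjl
  · show (0 : ℝ) * (0) + (-1) * (-1) + (icg) * (-icg) ≤ icg
    nlinarith [hg, hg1]
  · show (0 : ℝ) * (1) + (-1) * (icg) + (icg) * (0) ≤ icg
    nlinarith [hg, hg1]
  · show (0 : ℝ) * (1) + (-1) * (-icg) + (icg) * (0) ≤ icg
    nlinarith [hg, hg1]
  · show (0 : ℝ) * (-1) + (-1) * (icg) + (icg) * (0) ≤ icg
    nlinarith [hg, hg1]
  · show (0 : ℝ) * (-1) + (-1) * (-icg) + (icg) * (0) ≤ icg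
    nlinarith [hg, hg1]
  · show (0 : ℝ) * (icg) + (-1) * (0) + (icg) * (1) ≤ icg
    nlinarith [hg, hg1]
  · show (0 : ℝ) * (icg) + (-1) * (0) + (icg) * (-1) ≤ icg
    nlinarith [hg, hg1]
  · show (0 : ℝ) * (-icg) + (-1) * (0) + (icg) * (1) ≤ icg
    nlinarith [hg, hg1]
  · show (0 : ℝ) * (-icg) + (-1) * (0) + (icg) * (-1) ≤ icg
    nlinarith [hg, hg1]
  · show (0 : ℝ) * (0) + (-1) * (1) + (-icg) * (icg) ≤ icg
    nlinarith [hg, hg1]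
  · show (0 : ℝ) * (0) + (-1) * (1) + (-icg) * (-icg) ≤ icg
    nlinarith [hg, hg1]
  · show (0 : ℝ) * (0) + (-1) * (-1) + (-icg) * (icg) ≤ icg
    nlinarith [hg, hg1]
  · exact absurd rfl hjl
  · show (0 : ℝ) * (1) + (-1) * (icg) + (-icg) * (0) ≤ icg
    nlinarith [hg, hg1]
  · show (0 : ℝ) * (1) + (-1) * (-icg) + (-icg) * (0) ≤ icg
    nlinarith [hg, hg1]
  · show (0 : ℝ) * (-1) + (-1) * (icg) + (-icg) * (0) ≤ icg
    nlinarith [hg, hg1]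
  · show (0 : ℝ) * (-1) + (-1) * (-icg) + (-icg) * (0) ≤ icg
    nlinarith [hg, hg1]
  · show (0 : ℝ) * (icg) + (-1) * (0) + (-icg) * (1) ≤ icg
    nlinarith [hg, hg1]
  · show (0 : ℝ) * (icg) + (-1) * (0) + (-icg) * (-1) ≤ icg
    nlinarith [hg, hg1]
  · show (0 : ℝ) * (-icg) + (-1) * (0) + (-icg) * (1) ≤ icg
    nlinarith [hg, hg1]
  · show (0 : ℝ) * (-icg) + (-1) * (0) + (-icg) * (-1) ≤ icg
    nlinarith [hg, hg1]
  · show (1 : ℝ) * (0) + (icg) * (1) + (0) * (icg) ≤ icg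
    nlinarith [hg, hg1]
  · show (1 : ℝ) * (0) + (icg) * (1) + (0) * (-icg) ≤ icg
    nlinarith [hg, hg1]
  · show (1 : ℝ) * (0) + (icg) * (-1) + (0) * (icg) ≤ icg
    nlinarith [hg, hg1]
  · show (1 : ℝ) * (0) + (icg) * (-1) + (0) * (-icg) ≤ icg
    nlinarith [hg, hg1]
  · exact absurd rfl hjl
  · show (1 : ℝ) * (1) + (icg) * (-icg) + (0) * (0) ≤ icg
    nlinarith [hg, hg1]
  · show (1 : ℝ) * (-1) + (icg) * (icg) + (0) * (0) ≤ icg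
    nlinarith [hg, hg1]
  · show (1 : ℝ) * (-1) + (icg) * (-icg) + (0) * (0) ≤ icg
    nlinarith [hg, hg1]
  · show (1 : ℝ) * (icg) + (icg) * (0) + (0) * (1) ≤ icg
    nlinarith [hg, hg1]
  · show (1 : ℝ) * (icg) + (icg) * (0) + (0) * (-1) ≤ icg
    nlinarith [hg, hg1]
  · show (1 : ℝ) * (-icg) + (icg) * (0) + (0) * (1) ≤ icg
    nlinarith [hg, hg1]
  · show (1 : ℝ) * (-icg) + (icg) * (0) + (0) * (-1) ≤ icg
    nlinarith [hg, hg1]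
  · show (1 : ℝ) * (0) + (-icg) * (1) + (0) * (icg) ≤ icg
    nlinarith [hg, hg1]
  · show (1 : ℝ) * (0) + (-icg) * (1) + (0) * (-icg) ≤ icg
    nlinarith [hg, hg1]
  · show (1 : ℝ) * (0) + (-icg) * (-1) + (0) * (icg) ≤ icg
    nlinarith [hg, hg1]
  · show (1 : ℝ) * (0) + (-icg) * (-1) + (0) * (-icg) ≤ icg
    nlinarith [hg, hg1]
  · show (1 : ℝ) * (1) + (-icg) * (icg) + (0) * (0) ≤ icg
    nlinarith [hg, hg1]
  · exact absurd rfl hjl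
  · show (1 : ℝ) * (-1) + (-icg) * (icg) + (0) * (0) ≤ icg
    nlinarith [hg, hg1]
  · show (1 : ℝ) * (-1) + (-icg) * (-icg) + (0) * (0) ≤ icg
    nlinarith [hg, hg1]
  · show (1 : ℝ) * (icg) + (-icg) * (0) + (0) * (1) ≤ icg
    nlinarith [hg, hg1]
  · show (1 : ℝ) * (icg) + (-icg) * (0) + (0) * (-1) ≤ icg
    nlinarith [hg, hg1]
  · show (1 : ℝ) * (-icg) + (-icg) * (0) + (0) * (1) ≤ icg
    nlinarith [hg, hg1]
  · show (1 : ℝ) * (-icg) + (-icg) * (0) + (0) * (-1) ≤ icg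
    nlinarith [hg, hg1]
  · show (-1 : ℝ) * (0) + (icg) * (1) + (0) * (icg) ≤ icg
    nlinarith [hg, hg1]
  · show (-1 : ℝ) * (0) + (icg) * (1) + (0) * (-icg) ≤ icg
    nlinarith [hg, hg1]
  · show (-1 : ℝ) * (0) + (icg) * (-1) + (0) * (icg) ≤ icg
    nlinarith [hg, hg1]
  · show (-1 : ℝ) * (0) + (icg) * (-1) + (0) * (-icg) ≤ icg
    nlinarith [hg, hg1]
  · show (-1 : ℝ) * (1) + (icg) * (icg) + (0) * (0) ≤ icg
    nlinarith [hg, hg1]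
  · show (-1 : ℝ) * (1) + (icg) * (-icg) + (0) * (0) ≤ icg
    nlinarith [hg, hg1]
  · exact absurd rfl hjl
  · show (-1 : ℝ) * (-1) + (icg) * (-icg) + (0) * (0) ≤ icg
    nlinarith [hg, hg1]
  · show (-1 : ℝ) * (icg) + (icg) * (0) + (0) * (1) ≤ icg
    nlinarith [hg, hg1]
  · show (-1 : ℝ) * (icg) + (icg) * (0) + (0) * (-1) ≤ icg
    nlinarith [hg, hg1]
  · show (-1 : ℝ) * (-icg) + (icg) * (0) + (0) * (1) ≤ icg
    nlinarith [hg, hg1]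
  · show (-1 : ℝ) * (-icg) + (icg) * (0) + (0) * (-1) ≤ icg
    nlinarith [hg, hg1]
  · show (-1 : ℝ) * (0) + (-icg) * (1) + (0) * (icg) ≤ icg
    nlinarith [hg, hg1]
  · show (-1 : ℝ) * (0) + (-icg) * (1) + (0) * (-icg) ≤ icg
    nlinarith [hg, hg1]
  · show (-1 : ℝ) * (0) + (-icg) * (-1) + (0) * (icg) ≤ icg
    nlinarith [hg, hg1]
  · show (-1 : ℝ) * (0) + (-icg) * (-1) + (0) * (-icg) ≤ icg
    nlinarith [hg, hg1]
  · show (-1 : ℝ) * (1) + (-icg) * (icg) + (0) * (0) ≤ icg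
    nlinarith [hg, hg1]
  · show (-1 : ℝ) * (1) + (-icg) * (-icg) + (0) * (0) ≤ icg
    nlinarith [hg, hg1]
  · show (-1 : ℝ) * (-1) + (-icg) * (icg) + (0) * (0) ≤ icg
    nlinarith [hg, hg1]
  · exact absurd rfl hjl
  · show (-1 : ℝ) * (icg) + (-icg) * (0) + (0) * (1) ≤ icg
    nlinarith [hg, hg1]
  · show (-1 : ℝ) * (icg) + (-icg) * (0) + (0) * (-1) ≤ icg
    nlinarith [hg, hg1]
  · show (-1 : ℝ) * (-icg) + (-icg) * (0) + (0) * (1) ≤ icg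
    nlinarith [hg, hg1]
  · show (-1 : ℝ) * (-icg) + (-icg) * (0) + (0) * (-1) ≤ icg
    nlinarith [hg, hg1]
  · show (icg : ℝ) * (0) + (0) * (1) + (1) * (icg) ≤ icg
    nlinarith [hg, hg1]
  · show (icg : ℝ) * (0) + (0) * (1) + (1) * (-icg) ≤ icg
    nlinarith [hg, hg1]
  · show (icg : ℝ) * (0) + (0) * (-1) + (1) * (icg) ≤ icg
    nlinarith [hg, hg1]
  · show (icg : ℝ) * (0) + (0) * (-1) + (1) * (-icg) ≤ icg
    nlinarith [hg, hg1]
  · show (icg : ℝ) * (1) + (0) * (icg) + (1) * (0) ≤ icg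
    nlinarith [hg, hg1]
  · show (icg : ℝ) * (1) + (0) * (-icg) + (1) * (0) ≤ icg
    nlinarith [hg, hg1]
  · show (icg : ℝ) * (-1) + (0) * (icg) + (1) * (0) ≤ icg
    nlinarith [hg, hg1]
  · show (icg : ℝ) * (-1) + (0) * (-icg) + (1) * (0) ≤ icg
    nlinarith [hg, hg1]
  · exact absurd rfl hjl
  · show (icg : ℝ) * (icg) + (0) * (0) + (1) * (-1) ≤ icg
    nlinarith [hg, hg1]
  · show (icg : ℝ) * (-icg) + (0) * (0) + (1) * (1) ≤ icg
    nlinarith [hg, hg1]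
  · show (icg : ℝ) * (-icg) + (0) * (0) + (1) * (-1) ≤ icg
    nlinarith [hg, hg1]
  · show (icg : ℝ) * (0) + (0) * (1) + (-1) * (icg) ≤ icg
    nlinarith [hg, hg1]
  · show (icg : ℝ) * (0) + (0) * (1) + (-1) * (-icg) ≤ icg
    nlinarith [hg, hg1]
  · show (icg : ℝ) * (0) + (0) * (-1) + (-1) * (icg) ≤ icg
    nlinarith [hg, hg1]
  · show (icg : ℝ) * (0) + (0) * (-1) + (-1) * (-icg) ≤ icg
    nlinarith [hg, hg1]
  · show (icg : ℝ) * (1) + (0) * (icg) + (-1) * (0) ≤ icg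
    nlinarith [hg, hg1]
  · show (icg : ℝ) * (1) + (0) * (-icg) + (-1) * (0) ≤ icg
    nlinarith [hg, hg1]
  · show (icg : ℝ) * (-1) + (0) * (icg) + (-1) * (0) ≤ icg
    nlinarith [hg, hg1]
  · show (icg : ℝ) * (-1) + (0) * (-icg) + (-1) * (0) ≤ icg
    nlinarith [hg, hg1]
  · show (icg : ℝ) * (icg) + (0) * (0) + (-1) * (1) ≤ icg
    nlinarith [hg, hg1]
  · exact absurd rfl hjl
  · show (icg : ℝ) * (-icg) + (0) * (0) + (-1) * (1) ≤ icg
    nlinarith [hg, hg1]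
  · show (icg : ℝ) * (-icg) + (0) * (0) + (-1) * (-1) ≤ icg
    nlinarith [hg, hg1]
  · show (-icg : ℝ) * (0) + (0) * (1) + (1) * (icg) ≤ icg
    nlinarith [hg, hg1]
  · show (-icg : ℝ) * (0) + (0) * (1) + (1) * (-icg) ≤ icg
    nlinarith [hg, hg1]
  · show (-icg : ℝ) * (0) + (0) * (-1) + (1) * (icg) ≤ icg
    nlinarith [hg, hg1]
  · show (-icg : ℝ) * (0) + (0) * (-1) + (1) * (-icg) ≤ icg
    nlinarith [hg, hg1]
  · show (-icg : ℝ) * (1) + (0) * (icg) + (1) * (0) ≤ icg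
    nlinarith [hg, hg1]
  · show (-icg : ℝ) * (1) + (0) * (-icg) + (1) * (0) ≤ icg
    nlinarith [hg, hg1]
  · show (-icg : ℝ) * (-1) + (0) * (icg) + (1) * (0) ≤ icg
    nlinarith [hg, hg1]
  · show (-icg : ℝ) * (-1) + (0) * (-icg) + (1) * (0) ≤ icg
    nlinarith [hg, hg1]
  · show (-icg : ℝ) * (icg) + (0) * (0) + (1) * (1) ≤ icg
    nlinarith [hg, hg1]
  · show (-icg : ℝ) * (icg) + (0) * (0) + (1) * (-1) ≤ icg
    nlinarith [hg, hg1]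
  · exact absurd rfl hjl
  · show (-icg : ℝ) * (-icg) + (0) * (0) + (1) * (-1) ≤ icg
    nlinarith [hg, hg1]
  · show (-icg : ℝ) * (0) + (0) * (1) + (-1) * (icg) ≤ icg
    nlinarith [hg, hg1]
  · show (-icg : ℝ) * (0) + (0) * (1) + (-1) * (-icg) ≤ icg
    nlinarith [hg, hg1]
  · show (-icg : ℝ) * (0) + (0) * (-1) + (-1) * (icg) ≤ icg
    nlinarith [hg, hg1]
  · show (-icg : ℝ) * (0) + (0) * (-1) + (-1) * (-icg) ≤ icg
    nlinarith [hg, hg1]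
  · show (-icg : ℝ) * (1) + (0) * (icg) + (-1) * (0) ≤ icg
    nlinarith [hg, hg1]
  · show (-icg : ℝ) * (1) + (0) * (-icg) + (-1) * (0) ≤ icg
    nlinarith [hg, hg1]
  · show (-icg : ℝ) * (-1) + (0) * (icg) + (-1) * (0) ≤ icg
    nlinarith [hg, hg1]
  · show (-icg : ℝ) * (-1) + (0) * (-icg) + (-1) * (0) ≤ icg
    nlinarith [hg, hg1]
  · show (-icg : ℝ) * (icg) + (0) * (0) + (-1) * (1) ≤ icg
    nlinarith [hg, hg1]
  · show (-icg : ℝ) * (icg) + (0) * (0) + (-1) * (-1) ≤ icg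
    nlinarith [hg, hg1]
  · show (-icg : ℝ) * (-icg) + (0) * (0) + (-1) * (1) ≤ icg
    nlinarith [hg, hg1]
  · exact absurd rfl hjl

private noncomputable def icosP : Fin 12 → Fin 3 → ℝ := fun j a => icosQ j a / Real.sqrt (icg + 2)

private lemma icg2_pos : (0:ℝ) < icg + 2 := by linarith [icg_gt]

private lemma hm2 : Real.sqrt (icg + 2) ^ 2 = icg + 2 := Real.sq_sqrt (le_of_lt icg2_pos)

private lemma hmpos : (0:ℝ) < Real.sqrt (icg + 2) := Real.sqrt_pos.mpr icg2_pos

private lemma icosP_unit : ∀ j : Fin 12, icosP j 0 ^ 2 + icosP j 1 ^ 2 + icosP j 2 ^ 2 = 1 := by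
  intro j
  have h : icosP j 0 ^ 2 + icosP j 1 ^ 2 + icosP j 2 ^ 2
      = (icosQ j 0 ^ 2 + icosQ j 1 ^ 2 + icosQ j 2 ^ 2) / (Real.sqrt (icg + 2) ^ 2) := by
    unfold icosP; ring
  rw [h, hm2, icosQ_norm j, div_self (ne_of_gt icg2_pos)]

private lemma icosP_z : ∀ j : Fin 12, -1 < icosP j 2 := by
  intro j
  have h2 : icosP j 2 ^ 2 < 1 := by
    have h : icosP j 2 ^ 2 = icosQ j 2 ^ 2 / (icg + 2) := by
      unfold icosP; rw [div_pow, hm2]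
    rw [h, div_lt_one icg2_pos]
    linarith [icosQ_z j]
  nlinarith [sq_nonneg (icosP j 2 + 1)]

private noncomputable def Psi : Fin 12 → EuclideanSpace ℂ (Fin 2) :=
  fun j => lift (icosP j 0) (icosP j 1) (icosP j 2)

private lemma Psi_unit : ∀ j : Fin 12, ‖Psi j‖ = 1 :=
  fun j => (lift_spec _ _ _ (icosP_z j) (icosP_unit j)).1

private lemma Psi_pair : ∀ j l : Fin 12, j ≠ l →
    ‖(inner ℂ (Psi j) (Psi l) : ℂ)‖ ≤ Real.sqrt ((5 + Real.sqrt 5) / 10) := by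
  intro j l hjl
  have hs5 : Real.sqrt 5 ^ 2 = 5 := Real.sq_sqrt (by norm_num)
  obtain ⟨hu, hb0, hb1, hb2⟩ := lift_spec _ _ _ (icosP_z j) (icosP_unit j)
  obtain ⟨hv, hc0, hc1, hc2⟩ := lift_spec _ _ _ (icosP_z l) (icosP_unit l)
  have hB := bloch_inner (Psi j) (Psi l) hu hv
  have hPj : ∀ a, bloch (Psi j) a = icosP j a := by
    intro a; fin_cases a <;> assumption
  have hPl : ∀ a, bloch (Psi l) a = icosP l a := by
    intro a; fin_cases a <;> assumption
  rw [hPj 0, hPj 1, hPj 2, hPl 0, hPl 1, hPl 2] at hB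
  have hdot : icosP j 0 * icosP l 0 + icosP j 1 * icosP l 1 + icosP j 2 * icosP l 2
      ≤ Real.sqrt 5 / 5 := by
    have e : icosP j 0 * icosP l 0 + icosP j 1 * icosP l 1 + icosP j 2 * icosP l 2
        = (icosQ j 0 * icosQ l 0 + icosQ j 1 * icosQ l 1 + icosQ j 2 * icosQ l 2)
          / (Real.sqrt (icg + 2) ^ 2) := by
      unfold icosP; ring
    have h2 : icg / (icg + 2) = Real.sqrt 5 / 5 := by
      rw [div_eq_div_iff (ne_of_gt icg2_pos) (by norm_num : (5:ℝ) ≠ 0)]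
      unfold icg
      linear_combination (-1/2 : ℝ) * hs5
    rw [e, hm2, ← h2]
    exact (div_le_div_iff_of_pos_right icg2_pos).mpr (icosQ_dot j l hjl)
  have hsq : ‖(inner ℂ (Psi j) (Psi l) : ℂ)‖ ^ 2 ≤ (5 + Real.sqrt 5) / 10 := by linarith [hB]
  exact (Real.le_sqrt (norm_nonneg _) (by positivity)).mpr hsq

set_option maxHeartbeats 2000000 in
/-- With `a = √((5+√5)/10)`, the Tóth-type lower bound for `N = 12`
vectors in `ℂ²` is attained: `(1/2)csc(12π/(6·10)) = (1/2)csc(π/5) = a`, and the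
Grassmannian constant satisfies `μ_{12,2}(ℂ) = √((5+√5)/10)`. -/
theorem grassmannian_const_twelve_two :
    1 / 2 * (1 / Real.sin ((12 : ℝ) * Real.pi / (6 * ((12 : ℝ) - 2))))
      = Real.sqrt ((5 + Real.sqrt 5) / 10) ∧
    1 / 2 * (1 / Real.sin (Real.pi / 5)) = Real.sqrt ((5 + Real.sqrt 5) / 10) ∧
    grassmannianConst 12 2 = Real.sqrt ((5 + Real.sqrt 5) / 10) := by
  have hs5 : Real.sqrt 5 ^ 2 = 5 := Real.sq_sqrt (by norm_num)
  have hs0 : (0:ℝ) ≤ Real.sqrt 5 := Real.sqrt_nonneg 5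
  have hA2 : (Real.sqrt ((5 + Real.sqrt 5) / 10)) ^ 2 = (5 + Real.sqrt 5) / 10 :=
    Real.sq_sqrt (by positivity)
  have hApos : 0 < Real.sqrt ((5 + Real.sqrt 5) / 10) := Real.sqrt_pos.mpr (by positivity)
  have hsinpos : 0 < Real.sin (Real.pi / 5) :=
    Real.sin_pos_of_pos_of_lt_pi (by positivity) (by linarith [Real.pi_pos])
  have hsin2 : Real.sin (Real.pi / 5) ^ 2 = (10 - 2 * Real.sqrt 5) / 16 := by
    have hp := Real.sin_sq_add_cos_sq (Real.pi / 5)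
    have hc := Real.cos_pi_div_five
    linear_combination hp + (-Real.cos (Real.pi / 5) - (1 + Real.sqrt 5) / 4) * hc
      + (-1/16 : ℝ) * hs5
  have key2 : 1 / 2 * (1 / Real.sin (Real.pi / 5)) = Real.sqrt ((5 + Real.sqrt 5) / 10) := by
    have hprod : (2 * Real.sin (Real.pi / 5) * Real.sqrt ((5 + Real.sqrt 5) / 10)) ^ 2 = 1 := by
      have e : (2 * Real.sin (Real.pi / 5) * Real.sqrt ((5 + Real.sqrt 5) / 10)) ^ 2
          = 4 * Real.sin (Real.pi / 5) ^ 2 * (Real.sqrt ((5 + Real.sqrt 5) / 10)) ^ 2 := by ring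
      rw [e, hsin2, hA2]
      linear_combination (-1/20 : ℝ) * hs5
    have hxpos : 0 < 2 * Real.sin (Real.pi / 5) * Real.sqrt ((5 + Real.sqrt 5) / 10) := by
      positivity
    have hfac : (2 * Real.sin (Real.pi / 5) * Real.sqrt ((5 + Real.sqrt 5) / 10) - 1)
        * (2 * Real.sin (Real.pi / 5) * Real.sqrt ((5 + Real.sqrt 5) / 10) + 1) = 0 := by
      linear_combination hprod
    have h1 : 2 * Real.sin (Real.pi / 5) * Real.sqrt ((5 + Real.sqrt 5) / 10) = 1 := by
      rcases mul_eq_zero.mp hfac with h | h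
      · linarith
      · linarith
    have h2s : 2 * Real.sin (Real.pi / 5) ≠ 0 := by positivity
    have e2 : 1 / 2 * (1 / Real.sin (Real.pi / 5)) = 1 / (2 * Real.sin (Real.pi / 5)) := by
      ring
    rw [e2, div_eq_iff h2s]
    linarith [h1]
  refine ⟨?_, key2, ?_⟩
  · have e : (12 : ℝ) * Real.pi / (6 * ((12 : ℝ) - 2)) = Real.pi / 5 := by ring
    rw [e]; exact key2
  · haveI hne : Nonempty {p : Fin 12 × Fin 12 // p.1 ≠ p.2} := ⟨⟨(0, 1), by decide⟩⟩
    haveI hne2 : Nonempty {φ : Fin 12 → EuclideanSpace ℂ (Fin 2) // ∀ j, ‖φ j‖ = 1} :=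
      ⟨⟨Psi, Psi_unit⟩⟩
    apply le_antisymm
    · -- upper bound via the icosaplectic frame
      have hb : BddBelow (Set.range
          fun φ : {φ : Fin 12 → EuclideanSpace ℂ (Fin 2) // ∀ j, ‖φ j‖ = 1} =>
            coherence (φ : Fin 12 → EuclideanSpace ℂ (Fin 2))) := by
        refine ⟨0, ?_⟩
        rintro y ⟨φ, rfl⟩
        exact Real.iSup_nonneg (fun p => norm_nonneg _)
      have hle : grassmannianConst 12 2 ≤ coherence Psi := ciInf_le hb ⟨Psi, Psi_unit⟩
      refine le_trans hle ?_
      exact ciSup_le fun p => Psi_pair p.1.1 p.1.2 p.2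
    · -- lower bound via the Fejes Tóth / linear-programming argument on the Bloch sphere
      refine le_ciInf ?_
      rintro ⟨φ, hφ⟩
      by_contra hcon
      push_neg at hcon
      have hbdd : BddAbove (Set.range fun p : {p : Fin 12 × Fin 12 // p.1 ≠ p.2} =>
          ‖(inner ℂ (φ (p : Fin 12 × Fin 12).1) (φ (p : Fin 12 × Fin 12).2) : ℂ)‖) :=
        Set.Finite.bddAbove (Set.finite_range _)
      have hall : ∀ j l : Fin 12, j ≠ l →
          ‖(inner ℂ (φ j) (φ l) : ℂ)‖ < Real.sqrt ((5 + Real.sqrt 5) / 10) :=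
        fun j l h => lt_of_le_of_lt (le_ciSup hbdd ⟨(j, l), h⟩) hcon
      exact sphere12 (fun j => bloch (φ j))
        (fun j => bloch_unit (φ j) (hφ j))
        (fun j l h => by
          have hb := bloch_inner (φ j) (φ l) (hφ j) (hφ l)
          have hn := hall j l h
          have h2 : ‖(inner ℂ (φ j) (φ l) : ℂ)‖ ^ 2 < (5 + Real.sqrt 5) / 10 := by
            rw [← hA2]
            exact pow_lt_pow_left₀ hn (norm_nonneg _) (by norm_num)
          show bloch (φ j) 0 * bloch (φ l) 0 + bloch (φ j) 1 * bloch (φ l) 1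
              + bloch (φ j) 2 * bloch (φ l) 2 < Real.sqrt 5 / 5
          rw [hb]
          linarith [h2])
end
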